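/- Harish-Chandra's estimate for the basic spherical function of the hyperbolic plane: there exist constants c > 0 and d ∈ ℕ such that for all t ≥ 0, φ_0 evaluated at hyperbolic distance t from the origin satisfies φ_0(t) ≤ c (1 + t)^d e^{−t/2}; in fact one may take d = 1. -/

import Mathlib

open Complex Real MeasureTheory

/-- The Poisson kernel of the disk: `P(z,b) = (1 − |z|²)/|b − z|²`. -/
noncomputable def poissonKer (z b : ℂ) : ℝ :=
  (1 - ‖z‖ ^ 2) / ‖b - z‖ ^ 2

/-- The basic spherical function `φ₀` of the hyperbolic disk. -/
noncomputable def sphFn0 (z : ℂ) : ℂ :=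
  (1 / (2 * π)) * ∫ t in (0:ℝ)..(2 * π),
    ((poissonKer z (Complex.exp (Complex.I * t)) : ℂ)) ^ ((1 / 2 : ℂ))

lemma HC.tanh_half (t : ℝ) : Real.tanh (t/2) = (Real.exp t - 1)/(Real.exp t + 1) := by
  have h : Real.exp (t/2) ^ 2 = Real.exp t := by
    rw [sq, ← Real.exp_add]; ring_nf
  have h2 : Real.exp (-(t/2)) = (Real.exp (t/2))⁻¹ := Real.exp_neg _
  rw [Real.tanh_eq_sinh_div_cosh, Real.sinh_eq, Real.cosh_eq, h2]
  have hp : (0:ℝ) < Real.exp (t/2) := Real.exp_pos _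
  have hp2 : (0:ℝ) < Real.exp t := Real.exp_pos _
  field_simp
  nlinarith [h]

lemma HC.integral_arsinh (a c : ℝ) (ha : 0 < a) :
    ∫ θ in (0:ℝ)..π, c / Real.sqrt (a^2 + θ^2) = c * Real.arsinh (π/a) := by
  have hcont : Continuous (fun θ : ℝ => c / Real.sqrt (a^2 + θ^2)) := by
    apply continuous_const.div (by fun_prop)
    intro x
    have : 0 < Real.sqrt (a^2 + x^2) := Real.sqrt_pos.2 (by positivity)
    exact this.ne'
  have hderiv : ∀ θ ∈ Set.uIcc (0:ℝ) π,
      HasDerivAt (fun x => c * Real.arsinh (x/a)) (c / Real.sqrt (a^2 + θ^2)) θ := by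
    intro θ _
    have h1 : HasDerivAt (fun x : ℝ => x/a) (1/a) θ := by
      simpa using (hasDerivAt_id θ).div_const a
    have h2 := (Real.hasDerivAt_arsinh (θ/a)).comp θ h1
    have h3 := h2.const_mul c
    refine HasDerivAt.congr_deriv h3 ?_
    have hs : Real.sqrt (1 + (θ/a)^2) = Real.sqrt (a^2 + θ^2) / a := by
      rw [eq_div_iff ha.ne']
      rw [← Real.sqrt_sq ha.le, ← Real.sqrt_mul (by positivity)]
      congr 1
      field_simp
      rw [Real.sq_sqrt (by positivity)]
    rw [hs]
    have h4 : 0 < Real.sqrt (a^2 + θ^2) := Real.sqrt_pos.2 (by positivity)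
    field_simp
  rw [intervalIntegral.integral_eq_sub_of_hasDerivAt hderiv (hcont.intervalIntegrable _ _)]
  simp

lemma HC.cos_two_pi_sub (θ : ℝ) : Real.cos (2*π - θ) = Real.cos θ := by
  rw [Real.cos_sub]; simp

lemma HC.Dlow {r θ : ℝ} (hr0 : 0 ≤ r) (hr1 : r < 1) (hθ0 : 0 ≤ θ) (hθ2 : θ ≤ 2*π) :
    ((1-r)^2 + (min θ (2*π - θ))^2) / 49 ≤ (Real.cos θ - r)^2 + (Real.sin θ)^2 := by
  set m := min θ (2*π - θ) with hm
  have hπ3 := Real.pi_gt_three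
  have hπ315 := Real.pi_lt_d2
  have hπ2 : (0:ℝ) < π^2 := by positivity
  have hm0 : 0 ≤ m := le_min hθ0 (by linarith)
  have hmπ : m ≤ π := by
    rcases le_total θ π with h | h
    · exact le_trans (min_le_left _ _) h
    · exact le_trans (min_le_right _ _) (by linarith)
  have hcosθ : Real.cos θ = Real.cos m := by
    rcases le_total θ π with h | h
    · rw [hm, min_eq_left (by linarith)]
    · rw [hm, min_eq_right (by linarith), HC.cos_two_pi_sub]
  have hcosm : Real.cos m ≤ 1 - 2/π^2 * m^2 :=
    Real.cos_le_one_sub_mul_cos_sq (by rw [_root_.abs_of_nonneg hm0]; exact hmπ)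
  have hub : Real.cos θ ≤ 1 - 2/π^2 * m^2 := by rw [hcosθ]; exact hcosm
  have hkey : (Real.cos θ - r)^2 + (Real.sin θ)^2 = (1-r)^2 + 2*r*(1 - Real.cos θ) := by
    linear_combination Real.sin_sq_add_cos_sq θ
  have hcos1 : Real.cos θ ≤ 1 := Real.cos_le_one θ
  have hq : (1/5) * m^2 ≤ 2/π^2 * m^2 := by
    apply mul_le_mul_of_nonneg_right _ (sq_nonneg m)
    rw [div_le_div_iff₀ (by norm_num) hπ2]
    nlinarith
  rcases le_total r (1/2) with h | h
  · have hA : (1:ℝ)/4 ≤ (1-r)^2 := by nlinarith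
    have hA1 : (1-r)^2 ≤ 1 := by nlinarith
    have hM : m^2 ≤ 10 := by nlinarith
    have h2r : 0 ≤ 2*r*(1 - Real.cos θ) :=
      mul_nonneg (by linarith) (by linarith)
    rw [hkey]
    linarith
  · have hp : 0 ≤ (2*r - 1) * (1 - Real.cos θ) :=
      mul_nonneg (by linarith) (by linarith)
    have hpe : (2*r-1)*(1 - Real.cos θ) = 2*r*(1 - Real.cos θ) - (1 - Real.cos θ) := by ring
    have h1C : m^2/5 ≤ 1 - Real.cos θ := by linarith
    rw [hkey]
    have hA0 : 0 ≤ (1-r)^2 := sq_nonneg _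
    linarith

set_option maxHeartbeats 1000000 in
/-- Harish-Chandra's estimate for the basic spherical function of the
hyperbolic plane: there is a constant `c > 0` such that for all `t ≥ 0`,
the value of `φ₀` at the point `tanh(t/2)` (at hyperbolic distance `t` from
the origin) satisfies `φ₀(t) ≤ c (1 + t)^d e^{−t/2}` with `d = 1`. -/
theorem sphFn0_harish_chandra_estimate :
    ∃ c : ℝ, 0 < c ∧ ∀ t : ℝ, 0 ≤ t →
      ‖sphFn0 ((Real.tanh (t / 2) : ℝ) : ℂ)‖ ≤
        c * (1 + t) ^ (1 : ℕ) * Real.exp (-t / 2) := by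
  refine ⟨100, by norm_num, ?_⟩
  intro t ht
  have hπ3 := Real.pi_gt_three
  have hπpos := Real.pi_pos
  set E := Real.exp t with hE
  have hE1 : 1 ≤ E := Real.one_le_exp ht
  have htanh : Real.tanh (t/2) = (E - 1)/(E + 1) := HC.tanh_half t
  set r := Real.tanh (t / 2) with hrdef
  have hr0 : 0 ≤ r := by
    rw [htanh]; exact div_nonneg (by linarith) (by linarith)
  have hr1 : r < 1 := by
    rw [htanh, div_lt_one (by linarith)]; linarith
  set a := 1 - r with hadef
  have ha0 : 0 < a := by rw [hadef]; linarith
  have ha1 : a ≤ 1 := by rw [hadef]; linarith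
  have haeq : a = 2/(E+1) := by
    rw [hadef, htanh]; field_simp; norm_num
  have haE : Real.exp (-t) ≤ a := by
    rw [haeq, Real.exp_neg, ← hE]
    rw [inv_le_iff_one_le_mul₀ (by linarith)]
    rw [div_mul_eq_mul_div, le_div_iff₀ (by linarith)]
    linarith
  have hloga : -t ≤ Real.log a := by
    calc -t = Real.log (Real.exp (-t)) := (Real.log_exp _).symm
    _ ≤ Real.log a := Real.log_le_log (Real.exp_pos _) haE
  have h1r2 : 0 ≤ 1 - r^2 := by nlinarith
  have hsq : Real.sqrt (1 - r^2) ≤ 2 * Real.exp (-t/2) := by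
    have he : Real.exp (-t/2)^2 = Real.exp (-t) := by
      rw [sq, ← Real.exp_add]; ring_nf
    have h4 : 1 - r^2 ≤ (2 * Real.exp (-t/2))^2 := by
      have h5 : (2 * Real.exp (-t/2))^2 = 4 * Real.exp (-t) := by rw [mul_pow, he]; ring
      have h6 : 1 - r^2 ≤ 2 * a := by rw [hadef]; nlinarith
      have hEpos : (0:ℝ) < E := by linarith
      have h8 : (1:ℝ) ≤ E⁻¹ * (E+1) := by
        rw [inv_mul_eq_div, le_div_iff₀ hEpos]; linarith
      have h7 : a ≤ 2 * Real.exp (-t) := by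
        rw [haeq, Real.exp_neg, ← hE, div_le_iff₀ (by linarith), mul_assoc]
        linarith
      rw [h5]; linarith
    calc Real.sqrt (1 - r^2) ≤ Real.sqrt ((2 * Real.exp (-t/2))^2) := Real.sqrt_le_sqrt h4
    _ = 2 * Real.exp (-t/2) := Real.sqrt_sq (by positivity)
  -- the integrand and its majorant
  set f : ℝ → ℂ :=
    fun θ => ((poissonKer ((r:ℝ):ℂ) (Complex.exp (Complex.I * θ)) : ℝ) : ℂ) ^ ((1/2 : ℂ)) with hf
  set g : ℝ → ℝ :=
    fun θ => 7 * Real.sqrt (1 - r^2) / Real.sqrt (a^2 + (min θ (2*π - θ))^2) with hg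
  have habs_z : ‖((r:ℝ):ℂ)‖ = r := by
    rw [Complex.norm_real, Real.norm_eq_abs, _root_.abs_of_nonneg hr0]
  have hbound : ∀ θ ∈ Set.Ioc (0:ℝ) (2*π), ‖f θ‖ ≤ g θ := by
    intro θ hθ
    obtain ⟨hθ0, hθ2⟩ := hθ
    have hDval : ‖Complex.exp (Complex.I * θ) - ((r:ℝ):ℂ)‖^2
        = (Real.cos θ - r)^2 + (Real.sin θ)^2 := by
      rw [Complex.sq_norm, mul_comm Complex.I, Complex.exp_mul_I]
      simp [Complex.normSq_apply, Complex.cos_ofReal_re, Complex.sin_ofReal_re]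
      ring
    have hD49 : (a^2 + (min θ (2*π - θ))^2)/49
        ≤ ‖Complex.exp (Complex.I * θ) - ((r:ℝ):ℂ)‖^2 := by
      rw [hDval, hadef]; exact HC.Dlow hr0 hr1 hθ0.le hθ2
    have hden_pos : 0 < a^2 + (min θ (2*π - θ))^2 :=
      add_pos_of_pos_of_nonneg (pow_pos ha0 2) (sq_nonneg _)
    have hDpos : 0 < ‖Complex.exp (Complex.I * θ) - ((r:ℝ):ℂ)‖^2 :=
      lt_of_lt_of_le (by positivity) hD49
    have hP : poissonKer ((r:ℝ):ℂ) (Complex.exp (Complex.I * θ))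
        = (1 - r^2) / ‖Complex.exp (Complex.I * θ) - ((r:ℝ):ℂ)‖^2 := by
      unfold poissonKer; rw [habs_z]
    have hPnn : 0 ≤ poissonKer ((r:ℝ):ℂ) (Complex.exp (Complex.I * θ)) := by
      rw [hP]; positivity
    have hnorm : ‖f θ‖ = Real.sqrt (poissonKer ((r:ℝ):ℂ) (Complex.exp (Complex.I * θ))) := by
      simp only [hf]
      rw [Complex.norm_cpow_eq_rpow_re_of_nonneg hPnn (by simp)]
      rw [Real.sqrt_eq_rpow]
      norm_num
    have hs7 : Real.sqrt (a^2 + (min θ (2*π - θ))^2)/7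
        ≤ Real.sqrt (‖Complex.exp (Complex.I * θ) - ((r:ℝ):ℂ)‖^2) := by
      have h49 : Real.sqrt (a^2 + (min θ (2*π - θ))^2)/7
          = Real.sqrt ((a^2 + (min θ (2*π - θ))^2)/49) := by
        rw [Real.sqrt_div hden_pos.le]
        rw [show (49:ℝ) = 7^2 by norm_num, Real.sqrt_sq (by norm_num : (0:ℝ) ≤ 7)]
      rw [h49]
      exact Real.sqrt_le_sqrt hD49
    rw [hnorm, hP, Real.sqrt_div h1r2]
    simp only [hg]
    have hq7 : 0 < Real.sqrt (a^2 + (min θ (2*π - θ))^2)/7 := by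
      have : 0 < Real.sqrt (a^2 + (min θ (2*π - θ))^2) := Real.sqrt_pos.2 hden_pos
      linarith
    have hrw : 7 * Real.sqrt (1 - r^2) / Real.sqrt (a^2 + (min θ (2*π - θ))^2)
        = Real.sqrt (1 - r^2) / (Real.sqrt (a^2 + (min θ (2*π - θ))^2)/7) := by
      rw [div_div_eq_mul_div]; ring
    rw [hrw]
    gcongr
  -- integrability of the majorant
  have hden_pos' : ∀ x : ℝ, 0 < a^2 + (min x (2*π - x))^2 := fun x =>
    add_pos_of_pos_of_nonneg (pow_pos ha0 2) (sq_nonneg _)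
  have hgc : Continuous g := by
    simp only [hg]
    apply continuous_const.div
    · apply Real.continuous_sqrt.comp; fun_prop
    · intro x
      exact (Real.sqrt_pos.2 (hden_pos' x)).ne'
  have hle1 : ‖∫ θ in (0:ℝ)..(2*π), f θ‖ ≤ |∫ θ in (0:ℝ)..(2*π), g θ| := by
    apply intervalIntegral.norm_integral_le_abs_of_norm_le _ (hgc.intervalIntegrable _ _)
    rw [Set.uIoc_of_le (by positivity : (0:ℝ) ≤ 2*π)]
    filter_upwards [ae_restrict_mem measurableSet_Ioc] with θ hθ using hbound θ hθ
  -- computing the majorant integral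
  set G : ℝ → ℝ := fun u => 7 * Real.sqrt (1 - r^2) / Real.sqrt (a^2 + u^2) with hGdef
  have hGc : Continuous G := by
    rw [hGdef]
    apply continuous_const.div (by fun_prop)
    intro x
    exact (Real.sqrt_pos.2 (by positivity)).ne'
  have hg1 : ∫ θ in (0:ℝ)..π, g θ = ∫ θ in (0:ℝ)..π, G θ := by
    apply intervalIntegral.integral_congr
    intro θ hθ
    rw [Set.uIcc_of_le hπpos.le] at hθ
    simp only [hg, hGdef]
    rw [min_eq_left (by linarith [hθ.1, hθ.2] : θ ≤ 2*π - θ)]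
  have hg2 : ∫ θ in π..(2*π), g θ = ∫ θ in (0:ℝ)..π, G θ := by
    have hcongr : ∫ θ in π..(2*π), g θ = ∫ θ in π..(2*π), G (2*π - θ) := by
      apply intervalIntegral.integral_congr
      intro θ hθ
      rw [Set.uIcc_of_le (by linarith)] at hθ
      simp only [hg, hGdef]
      rw [min_eq_right (by linarith [hθ.1] : 2*π - θ ≤ θ)]
    rw [hcongr, intervalIntegral.integral_comp_sub_left G (2*π)]
    congr 1 <;> ring
  have hGval : ∫ θ in (0:ℝ)..π, G θ
      = 7 * Real.sqrt (1 - r^2) * Real.arsinh (π/a) := HC.integral_arsinh a _ ha0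
  have hsplit : ∫ θ in (0:ℝ)..(2*π), g θ = 14 * Real.sqrt (1 - r^2) * Real.arsinh (π/a) := by
    rw [← intervalIntegral.integral_add_adjacent_intervals
      (hgc.intervalIntegrable 0 π) (hgc.intervalIntegrable π (2*π)), hg1, hg2, hGval]
    ring
  -- arsinh bound
  have har0 : 0 ≤ Real.arsinh (π/a) := Real.arsinh_nonneg_iff.2 (by positivity)
  have har : Real.arsinh (π/a) ≤ 2 + t := by
    rw [Real.arsinh]
    have hx0 : 0 < π/a := by positivity
    have hsb : Real.sqrt (1 + (π/a)^2) ≤ 1 + π/a := by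
      rw [show (1 + π/a : ℝ) = Real.sqrt ((1 + π/a)^2) from (Real.sqrt_sq (by positivity)).symm]
      exact Real.sqrt_le_sqrt (by nlinarith)
    have hstep : π/a + Real.sqrt (1 + (π/a)^2) ≤ (1 + 2*π)/a := by
      have h1a : 1 ≤ 1/a := by rw [le_div_iff₀ ha0]; linarith
      have hsplit2 : (1 + 2*π)/a = 1/a + 2*(π/a) := by field_simp
      rw [hsplit2]; linarith
    calc Real.log (π/a + Real.sqrt (1 + (π/a)^2)) ≤ Real.log ((1 + 2*π)/a) :=
          Real.log_le_log (by positivity) hstep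
    _ = Real.log (1 + 2*π) - Real.log a := Real.log_div (by positivity) ha0.ne'
    _ ≤ 2 + t := by
        have hl : Real.log (1 + 2*π) ≤ 2 := by
          rw [Real.log_le_iff_le_exp (by positivity)]
          have he := Real.exp_one_gt_d9
          have he2 : Real.exp 2 = Real.exp 1 ^ 2 := by
            rw [sq, ← Real.exp_add]; norm_num
          nlinarith [Real.pi_lt_d2]
        linarith [hloga]
  have hIb : |∫ θ in (0:ℝ)..(2*π), g θ| ≤ 56 * (1 + t) * Real.exp (-t/2) := by
    rw [hsplit, _root_.abs_of_nonneg (mul_nonneg (mul_nonneg (by norm_num) (Real.sqrt_nonneg _)) har0)]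
    calc 14 * Real.sqrt (1 - r^2) * Real.arsinh (π/a)
        ≤ 14 * (2 * Real.exp (-t/2)) * (2 + t) := by
          gcongr
    _ ≤ 56 * (1 + t) * Real.exp (-t/2) := by nlinarith [Real.exp_pos (-t/2)]
  -- final assembly
  have habs1 : ‖1/(2*(π:ℂ))‖ = 1/(2*π) := by
    rw [norm_div, norm_one, norm_mul]
    simp [Complex.norm_real, abs_of_pos hπpos]
  have hfinal : ‖sphFn0 ((r:ℝ):ℂ)‖ ≤ 56 * (1 + t) * Real.exp (-t/2) := by
    rw [sphFn0]
    rw [norm_mul]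
    have h2π : (0:ℝ) < 2*π := by linarith
    calc ‖1/(2*(π:ℂ))‖ * ‖∫ θ in (0:ℝ)..(2*π), f θ‖
        ≤ 1 * (56 * (1 + t) * Real.exp (-t/2)) := by
          apply mul_le_mul
          · rw [habs1]; rw [div_le_one h2π]; linarith
          · exact le_trans hle1 hIb
          · exact norm_nonneg _
          · norm_num
    _ = 56 * (1 + t) * Real.exp (-t/2) := by ring
  calc ‖sphFn0 ((r:ℝ):ℂ)‖ ≤ 56 * (1 + t) * Real.exp (-t/2) := hfinal
  _ ≤ 100 * (1 + t)^(1:ℕ) * Real.exp (-t / 2) := by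
      rw [pow_one]
      have := Real.exp_pos (-t/2)
      nlinarith
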